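/- Let 0 < a < b, let 0 < ε < Δ₀, let m ≥ 1 be an integer, and set c = b/a. Then for any positive reals ε₀, …, ε_m satisfying ε₀ ≤ ε/2 and ε_m ≥ Δ₀/2, one has ∑_{k=0}^{m−1} ε_{k+1}^a / ε_k^b ≥ c^{1/(c−1) − m/(c^m−1)} · (2/ε)^{b−a} · (Δ₀/ε)^{(b−a)/(c^m−1)}. -/

import Mathlib

lemma fm_aux_identity (c : ℝ) (m : ℕ) :
    (c-1)^2 * ∑ j ∈ Finset.range m, ((m:ℝ)-1-j) * c^j = c^m - 1 - m*(c-1) := by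
  induction m with
  | zero => simp
  | succ n ih =>
    have hgeom : (∑ j ∈ Finset.range n, c^j) * (c-1) = c^n - 1 := geom_sum_mul c n
    rw [Finset.sum_range_succ]
    have hcg : ∀ j ∈ Finset.range n, (((n+1:ℕ):ℝ)-1-(j:ℝ)) * c^j
        = ((n:ℝ)-1-j)*c^j + c^j := by
      intro j _; push_cast; ring
    rw [Finset.sum_congr rfl hcg, Finset.sum_add_distrib]
    push_cast
    linear_combination ih + (c-1)*hgeom



/-- **Lower bound for the fixed-`m` constrained problem** (Lemma: fixed m).
For `c = b/a`, any positive `ε₀, …, ε_m` with `ε₀ ≤ ε/2` and `ε_m ≥ Δ₀/2` satisfy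
`∑_{k=0}^{m-1} ε_{k+1}^a/ε_k^b ≥ c^{1/(c-1) - m/(c^m-1)} · (2/ε)^{b-a} · (Δ₀/ε)^{(b-a)/(c^m-1)}`. -/
theorem fixed_m_lower_bound (a b ε Δ₀ : ℝ)
    (ha : 0 < a) (hab : a < b) (hε : 0 < ε) (hεΔ : ε < Δ₀)
    (m : ℕ) (hm : 1 ≤ m) (c : ℝ) (hc : c = b / a)
    (eps : ℕ → ℝ)
    (hpos : ∀ k ≤ m, 0 < eps k)
    (h0 : eps 0 ≤ ε / 2) (hM : eps m ≥ Δ₀ / 2) :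
    ∑ k ∈ Finset.range m, (eps (k + 1)) ^ a / (eps k) ^ b ≥
      c ^ (1 / (c - 1) - (m : ℝ) / (c ^ m - 1)) * (2 / ε) ^ (b - a) *
        (Δ₀ / ε) ^ ((b - a) / (c ^ m - 1)) := by
  have hb : 0 < b := ha.trans hab
  have hc1 : 1 < c := by rw [hc]; exact (one_lt_div ha).mpr hab
  have hc0 : 0 < c := lt_trans one_pos hc1
  have hba : b = a * c := by rw [hc]; field_simp
  have hcm1 : 1 < c ^ m := one_lt_pow₀ hc1 (by omega)
  have hden : 0 < c ^ m - 1 := sub_pos.mpr hcm1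
  have hcs : 0 < c - 1 := sub_pos.mpr hc1
  set q : ℝ := (c - 1) / (c ^ m - 1) with hq
  have hq0 : 0 < q := div_pos hcs hden
  set w : ℕ → ℝ := fun k : ℕ => c ^ ((m:ℝ) - 1 - (k:ℝ)) * q with hwdef
  have hwpos : ∀ k, 0 < w k := fun k => mul_pos (Real.rpow_pos_of_pos hc0 _) hq0
  have hrw : ∀ k ∈ Finset.range m, c ^ ((m:ℝ) - 1 - (k:ℝ)) = c ^ (m - 1 - k : ℕ) := by
    intro k hk
    rw [Finset.mem_range] at hk
    rw [← Real.rpow_natCast c (m - 1 - k)]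
    congr 1
    have h1 : (1:ℕ) + k ≤ m := by omega
    have : m - 1 - k = m - (1 + k) := by omega
    rw [this, Nat.cast_sub h1]
    push_cast; ring
  have hsumw : ∑ k ∈ Finset.range m, w k = 1 := by
    have h : ∑ k ∈ Finset.range m, w k = (∑ k ∈ Finset.range m, c ^ (m - 1 - k : ℕ)) * q := by
      rw [Finset.sum_mul]
      exact Finset.sum_congr rfl fun k hk => by rw [hwdef]; simp only; rw [hrw k hk]
    rw [h, Finset.sum_range_reflect (fun j => c ^ j) m]
    have hgeom : (∑ j ∈ Finset.range m, c^j) * (c-1) = c^m - 1 := geom_sum_mul c m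
    rw [hq]
    field_simp
    linarith [hgeom]
  have hrel : ∀ k, a * w k = b * w (k + 1) := by
    intro k
    have h : c ^ ((m:ℝ) - 1 - (k:ℝ)) = c ^ ((m:ℝ) - 1 - ((k:ℝ)+1)) * c := by
      rw [← Real.rpow_add_one (ne_of_gt hc0)]
      congr 1; ring
    rw [hwdef]; simp only
    push_cast
    rw [h, hba]; ring
  have hE : ∑ k ∈ Finset.range m, (k:ℝ) * w k = 1/(c-1) - (m:ℝ)/(c^m - 1) := by
    have h1 : ∑ k ∈ Finset.range m, (k:ℝ) * w k
        = (∑ k ∈ Finset.range m, (k:ℝ) * c ^ (m - 1 - k : ℕ)) * q := by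
      rw [Finset.sum_mul]
      refine Finset.sum_congr rfl fun k hk => ?_
      rw [hwdef]; simp only; rw [hrw k hk]; ring
    have h2 := Finset.sum_range_reflect (fun j => (((m - 1 - j : ℕ)):ℝ) * c ^ j) m
    have h3 : ∑ k ∈ Finset.range m, (((m - 1 - (m - 1 - k) : ℕ)):ℝ) * c ^ (m - 1 - k)
        = ∑ k ∈ Finset.range m, (k:ℝ) * c ^ (m - 1 - k : ℕ) := by
      refine Finset.sum_congr rfl fun k hk => ?_
      rw [Finset.mem_range] at hk
      congr 2
      omega
    have h4 : ∑ j ∈ Finset.range m, (((m - 1 - j : ℕ)):ℝ) * c ^ j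
        = ∑ j ∈ Finset.range m, ((m:ℝ) - 1 - j) * c ^ j := by
      refine Finset.sum_congr rfl fun j hj => ?_
      rw [Finset.mem_range] at hj
      congr 1
      have : m - 1 - j = m - (1 + j) := by omega
      rw [this, Nat.cast_sub (by omega)]
      push_cast; ring
    have h5 := fm_aux_identity c m
    rw [h1, ← h3, h2, h4]
    have hval : ∑ j ∈ Finset.range m, ((m:ℝ) - 1 - j) * c ^ j
        = (c^m - 1 - m*(c-1)) / (c-1)^2 := by
      field_simp
      linarith [h5]
    rw [hval, hq]
    field_simp
  -- positivity of terms
  have hepos : ∀ k ≤ m, 0 < eps k := hpos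
  have htpos : ∀ k ∈ Finset.range m, 0 < eps (k+1) ^ a / eps k ^ b := by
    intro k hk
    rw [Finset.mem_range] at hk
    exact div_pos (Real.rpow_pos_of_pos (hepos (k+1) (by omega)) _)
      (Real.rpow_pos_of_pos (hepos k (by omega)) _)
  -- AM-GM
  have amgm := Real.geom_mean_le_arith_mean_weighted (Finset.range m) w
      (fun k => (eps (k+1) ^ a / eps k ^ b) / w k)
      (fun k _ => (hwpos k).le) hsumw
      (fun k hk => (div_nonneg (htpos k hk).le (hwpos k).le))
  have hsumeq : ∑ k ∈ Finset.range m, w k * ((eps (k+1) ^ a / eps k ^ b) / w k)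
      = ∑ k ∈ Finset.range m, eps (k+1) ^ a / eps k ^ b := by
    refine Finset.sum_congr rfl fun k hk => ?_
    rw [mul_comm]
    exact div_mul_cancel₀ _ (ne_of_gt (hwpos k))
  rw [hsumeq] at amgm
  -- the telescoping function
  set g : ℕ → ℝ := fun k => eps k ^ (b * w k) with hgdef
  have hgpos : ∀ k ≤ m, 0 < g k := fun k hk => Real.rpow_pos_of_pos (hepos k hk) _
  have hterm : ∀ k ∈ Finset.range m,
      ((eps (k+1) ^ a / eps k ^ b) / w k) ^ (w k)
        = (g (k+1) / g k) * (w k) ^ (-(w k)) := by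
    intro k hk
    have hkm : k < m := Finset.mem_range.mp hk
    have he1 : (0:ℝ) < eps (k+1) := hepos _ (by omega)
    have he0 : (0:ℝ) < eps k := hepos _ (by omega)
    have e1 : ((eps (k+1) ^ a / eps k ^ b) / w k) ^ (w k)
        = (eps (k+1) ^ a / eps k ^ b) ^ (w k) / (w k) ^ (w k) :=
      Real.div_rpow (htpos k hk).le (hwpos k).le (w k)
    have e2 : (eps (k+1) ^ a / eps k ^ b) ^ (w k)
        = eps (k+1) ^ (a * w k) / eps k ^ (b * w k) := by
      rw [Real.div_rpow (Real.rpow_nonneg he1.le _) (Real.rpow_nonneg he0.le _),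
          ← Real.rpow_mul he1.le, ← Real.rpow_mul he0.le]
    rw [e1, e2, hrel k, Real.rpow_neg (hwpos k).le, hgdef]
    simp only
    exact div_eq_mul_inv _ _
  -- telescoping
  have htel : ∀ n, n ≤ m → ∏ k ∈ Finset.range n, (g (k+1) / g k) = g n / g 0 := by
    intro n
    induction n with
    | zero =>
      intro _
      rw [Finset.prod_range_zero, div_self (ne_of_gt (hgpos 0 (Nat.zero_le m)))]
    | succ p ih =>
      intro hp
      have hgp : g p ≠ 0 := ne_of_gt (hgpos p (by omega))
      rw [Finset.prod_range_succ, ih (by omega), mul_comm,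
          div_mul_div_cancel₀ hgp]
  have hprod1 : ∏ k ∈ Finset.range m, ((eps (k+1) ^ a / eps k ^ b) / w k) ^ (w k)
      = (g m / g 0) * ∏ k ∈ Finset.range m, (w k) ^ (-(w k)) := by
    rw [Finset.prod_congr rfl hterm, Finset.prod_mul_distrib, htel m le_rfl]
  have hcprod : ∏ k ∈ Finset.range m, (w k) ^ (-(w k))
      = c ^ (1/(c-1) - (m:ℝ)/(c^m-1) - ((m:ℝ)-1)) * q ^ (-1:ℝ) := by
    have h1 : ∀ k ∈ Finset.range m, (w k) ^ (-(w k))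
        = c ^ (((m:ℝ)-1-(k:ℝ)) * (-(w k))) * q ^ (-(w k)) := by
      intro k hk
      rw [hwdef]; simp only
      rw [Real.mul_rpow (Real.rpow_pos_of_pos hc0 _).le hq0.le, ← Real.rpow_mul hc0.le]
    rw [Finset.prod_congr rfl h1, Finset.prod_mul_distrib,
        ← Real.rpow_sum_of_pos hc0, ← Real.rpow_sum_of_pos hq0]
    congr 1
    · congr 1
      have h2 : ∀ k ∈ Finset.range m, ((m:ℝ)-1-(k:ℝ))*(-(w k))
          = (k:ℝ)*w k - ((m:ℝ)-1)*w k := fun k _ => by ring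
      rw [Finset.sum_congr rfl h2, Finset.sum_sub_distrib, hE, ← Finset.mul_sum, hsumw]
      ring
    · congr 1
      rw [Finset.sum_neg_distrib, hsumw]
  have hKpos : (0:ℝ) < c ^ (1/(c-1) - (m:ℝ)/(c^m-1)) := Real.rpow_pos_of_pos hc0 _
  have hK : c ^ (1/(c-1) - (m:ℝ)/(c^m-1) - ((m:ℝ)-1)) * q ^ (-1:ℝ)
      ≥ c ^ (1/(c-1) - (m:ℝ)/(c^m-1)) := by
    have h1 : c ^ (1/(c-1) - (m:ℝ)/(c^m-1) - ((m:ℝ)-1))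
        = c ^ (1/(c-1) - (m:ℝ)/(c^m-1)) * c ^ (-((m:ℝ)-1)) := by
      rw [← Real.rpow_add hc0]; ring_nf
    have hmm : c ^ (-((m:ℝ)-1)) = (c ^ (m-1:ℕ))⁻¹ := by
      rw [← Real.rpow_natCast c (m-1), ← Real.rpow_neg hc0.le]
      congr 1
      rw [Nat.cast_sub hm]; push_cast; ring
    have hcsucc : c ^ (m-1:ℕ) * c = c ^ m := by
      rw [← pow_succ]; congr 1; omega
    have hpm1 : (1:ℝ) ≤ c ^ (m-1:ℕ) := one_le_pow₀ hc1.le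
    have hle : c ^ (m-1:ℕ) * q ≤ 1 := by
      rw [hq, ← mul_div_assoc, div_le_one hden]
      nlinarith [hcsucc, hpm1]
    have h2 : (1:ℝ) ≤ c ^ (-((m:ℝ)-1)) * q ^ (-1:ℝ) := by
      rw [hmm, Real.rpow_neg_one, ← mul_inv]
      exact (one_le_inv₀ (mul_pos (pow_pos hc0 _) hq0)).mpr hle
    calc c ^ (1/(c-1) - (m:ℝ)/(c^m-1))
        = c ^ (1/(c-1) - (m:ℝ)/(c^m-1)) * 1 := by ring
      _ ≤ c ^ (1/(c-1) - (m:ℝ)/(c^m-1)) * (c ^ (-((m:ℝ)-1)) * q ^ (-1:ℝ)) := by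
          exact mul_le_mul_of_nonneg_left h2 hKpos.le
      _ = c ^ (1/(c-1) - (m:ℝ)/(c^m-1) - ((m:ℝ)-1)) * q ^ (-1:ℝ) := by
          rw [h1]; ring
  -- exponent values
  have hbwm : b * w m = (b - a)/(c^m - 1) := by
    rw [hwdef]; simp only
    rw [show (m:ℝ) - 1 - (m:ℝ) = -1 by ring, Real.rpow_neg_one, hq, hba]
    field_simp
  have hbw0 : b * w 0 = (b - a) + (b - a)/(c^m - 1) := by
    rw [hwdef]; simp only
    rw [show (m:ℝ) - 1 - ((0:ℕ):ℝ) = (m:ℝ) + (-1) by push_cast; ring,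
        Real.rpow_add hc0, Real.rpow_natCast, Real.rpow_neg_one, hq, hba]
    field_simp
    ring
  -- bounds on g m / g 0
  have hΔ2 : (0:ℝ) < Δ₀/2 := by linarith
  have hε2 : (0:ℝ) < ε/2 := by linarith
  have hgm : (Δ₀/2) ^ (b * w m) ≤ g m :=
    Real.rpow_le_rpow hΔ2.le hM (mul_pos hb (hwpos m)).le
  have hg0 : g 0 ≤ (ε/2) ^ (b * w 0) :=
    Real.rpow_le_rpow (hepos 0 (by omega)).le h0 (mul_pos hb (hwpos 0)).le
  have hg0pos : 0 < g 0 := hgpos 0 (by omega)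
  have hdivge : (Δ₀/2) ^ (b*w m) / (ε/2) ^ (b*w 0) ≤ g m / g 0 :=
    div_le_div₀ (hgpos m le_rfl).le hgm hg0pos hg0
  have hval2 : (Δ₀/2) ^ (b*w m) / (ε/2) ^ (b*w 0)
      = (2/ε) ^ (b-a) * (Δ₀/ε) ^ ((b-a)/(c^m-1)) := by
    rw [hbwm, hbw0, Real.rpow_add hε2]
    have hi1 : ((ε/2:ℝ) ^ (b-a))⁻¹ = (2/ε) ^ (b-a) := by
      rw [← Real.inv_rpow hε2.le]
      congr 1
      rw [inv_div]
    have hi2 : (Δ₀/2:ℝ) ^ ((b-a)/(c^m-1)) * (((ε/2:ℝ)) ^ ((b-a)/(c^m-1)))⁻¹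
        = (Δ₀/ε) ^ ((b-a)/(c^m-1)) := by
      rw [← Real.inv_rpow hε2.le,
          ← Real.mul_rpow hΔ2.le (by positivity)]
      congr 1
      rw [inv_div]
      field_simp
    rw [← hi1, ← hi2, div_eq_mul_inv, mul_inv]
    ring
  -- final combination
  have hfin : (2/ε) ^ (b-a) * (Δ₀/ε) ^ ((b-a)/(c^m-1)) * c ^ (1/(c-1) - (m:ℝ)/(c^m-1))
      ≤ (g m / g 0) * ∏ k ∈ Finset.range m, (w k) ^ (-(w k)) := by
    rw [hcprod]
    apply mul_le_mul
    · rw [← hval2]; exact hdivge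
    · exact hK
    · exact hKpos.le
    · exact (div_pos (hgpos m le_rfl) hg0pos).le
  rw [← hprod1] at hfin
  calc c ^ (1/(c-1) - (m:ℝ)/(c^m-1)) * (2/ε) ^ (b-a) * (Δ₀/ε) ^ ((b-a)/(c^m-1))
      = (2/ε) ^ (b-a) * (Δ₀/ε) ^ ((b-a)/(c^m-1)) * c ^ (1/(c-1) - (m:ℝ)/(c^m-1)) := by ring
    _ ≤ ∏ k ∈ Finset.range m, ((eps (k+1) ^ a / eps k ^ b) / w k) ^ (w k) := hfin
    _ ≤ ∑ k ∈ Finset.range m, eps (k+1) ^ a / eps k ^ b := amgm
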